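/- Let n ≥ 3, let 1 ≤ p ≤ n−1 be an integer, and let Ω ⊂ ℝⁿ be a bounded domain. Suppose w and v are C² on Ω, continuous on the closure of Ω, and satisfy G_p(A^w(x)) = −e^{−2w(x)} and G_p(A^v(x)) = −e^{−2v(x)} for all x ∈ Ω, with w = v on ∂Ω. Then w = v on all of Ω. (Uniqueness, via the maximum principle, of solutions with negative curvature constant −1 subject to Dirichlet boundary data.) -/

import Mathlib

open Matrix Metric Real

noncomputable section

attribute [local instance] Matrix.normedAddCommGroup Matrix.normedSpace

/-- The `i`-th partial derivative of `u` at `x`. -/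
def pd {n : ℕ} (u : EuclideanSpace ℝ (Fin n) → ℝ) (x : EuclideanSpace ℝ (Fin n)) (i : Fin n) : ℝ :=
  fderiv ℝ u x (EuclideanSpace.single i 1)

/-- The Hessian matrix `∇²u(x)`. -/
def hessian {n : ℕ} (u : EuclideanSpace ℝ (Fin n) → ℝ) (x : EuclideanSpace ℝ (Fin n)) :
    Matrix (Fin n) (Fin n) ℝ :=
  Matrix.of fun i j => pd (fun y => pd u y j) x i

/-- The conformal Schouten matrix `A^u(x) = ∇²u + ∇u ⊗ ∇u − (|∇u|²/2)·Iₙ`. -/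
def schouten {n : ℕ} (u : EuclideanSpace ℝ (Fin n) → ℝ) (x : EuclideanSpace ℝ (Fin n)) :
    Matrix (Fin n) (Fin n) ℝ :=
  hessian u x + Matrix.of (fun i j => pd u x i * pd u x j)
    - ((∑ i, (pd u x i) ^ 2) / 2) • (1 : Matrix (Fin n) (Fin n) ℝ)

/-- Eigenvalues of a symmetric matrix, sorted in nondecreasing order. -/
def sortedEig {n : ℕ} (A : Matrix (Fin n) (Fin n) ℝ) (hA : A.IsHermitian) : Fin n → ℝ :=
  hA.eigenvalues ∘ Tuple.sort hA.eigenvalues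

/-- `G_p(A) = (n−p)·(λ₁+⋯+λ_p) + p·(λ_{p+1}+⋯+λₙ)` (junk value `0` on non-symmetric input). -/
def Gp {n : ℕ} (p : ℕ) (A : Matrix (Fin n) (Fin n) ℝ) : ℝ :=
  if hA : A.IsHermitian then
    ∑ i : Fin n, (if (i : ℕ) < p then ((n : ℝ) - p) else (p : ℝ)) * sortedEig A hA i
  else 0

/-- Operator norm of a matrix, acting on Euclidean space. -/
def opNorm {n : ℕ} (A : Matrix (Fin n) (Fin n) ℝ) : ℝ :=
  ‖LinearMap.toContinuousLinearMap (Matrix.toEuclideanLin A)‖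

/-- `F` is uniformly elliptic with ellipticity constants `0 < l ≤ L`. -/
def UniformlyElliptic {n : ℕ} (F : Matrix (Fin n) (Fin n) ℝ → ℝ) (l L : ℝ) : Prop :=
  0 < l ∧ l ≤ L ∧
    ∀ W N : Matrix (Fin n) (Fin n) ℝ, W.IsHermitian → N.PosSemidef →
      l * opNorm N ≤ F (W + N) - F W ∧ F (W + N) - F W ≤ L * opNorm N

/-- `F` is concave on the space of symmetric matrices. -/
def ConcaveOnSym {n : ℕ} (F : Matrix (Fin n) (Fin n) ℝ → ℝ) : Prop :=
  ∀ A B : Matrix (Fin n) (Fin n) ℝ, A.IsHermitian → B.IsHermitian →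
    ∀ t : ℝ, 0 ≤ t → t ≤ 1 → t * F A + (1 - t) * F B ≤ F (t • A + (1 - t) • B)


namespace Aux

variable {n : ℕ}

/-- span of coordinate vectors indexed by `S` -/
def coordSpan (S : Finset (Fin n)) : Submodule ℝ (Fin n → ℝ) :=
  Submodule.span ℝ ((fun j => Pi.single j (1:ℝ)) '' (S : Set (Fin n)))

lemma mem_coordSpan_support {S : Finset (Fin n)} {c : Fin n → ℝ} (hc : c ∈ coordSpan S) :
    ∀ j ∉ S, c j = 0 := by
  induction hc using Submodule.span_induction with
  | mem x hx =>
      rcases hx with ⟨j, hj, rfl⟩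
      intro k hk
      have : k ≠ j := by rintro rfl; exact hk hj
      simp [Pi.single_apply, this]
  | zero => intro k _; rfl
  | add x y _ _ hx hy => intro k hk; simp [hx k hk, hy k hk]
  | smul a x _ hx => intro k hk; simp [hx k hk]

lemma finrank_coordSpan (S : Finset (Fin n)) :
    Module.finrank ℝ (coordSpan S) = S.card := by
  classical
  have hli : LinearIndependent ℝ (fun j : {x // x ∈ S} => (Pi.single (j : Fin n) (1:ℝ) : Fin n → ℝ)) := by
    have h := (Pi.basisFun ℝ (Fin n)).linearIndependent
    have := h.comp (Subtype.val : {x // x ∈ S} → Fin n) Subtype.val_injective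
    simpa [Function.comp_def] using this
  have hr : Set.range (fun j : {x // x ∈ S} => (Pi.single (j : Fin n) (1:ℝ) : Fin n → ℝ))
      = (fun j => Pi.single j (1:ℝ)) '' (S : Set (Fin n)) := by
    ext y; constructor
    · rintro ⟨⟨j, hj⟩, rfl⟩; exact ⟨j, hj, rfl⟩
    · rintro ⟨j, hj, rfl⟩; exact ⟨⟨j, hj⟩, rfl⟩
  have := finrank_span_eq_card hli
  rw [hr] at this
  rw [coordSpan, this, Fintype.card_coe]

end Aux

namespace Aux
variable {n : ℕ}

lemma mem_coordSpan_of_support {S : Finset (Fin n)} {c : Fin n → ℝ}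
    (hc : ∀ j ∉ S, c j = 0) : c ∈ coordSpan S := by
  classical
  have hrepr : c = ∑ j ∈ S, c j • (Pi.single j (1:ℝ) : Fin n → ℝ) := by
    funext k
    rw [Finset.sum_apply]
    by_cases hk : k ∈ S
    · rw [Finset.sum_eq_single k]
      · simp
      · intro b _ hb; simp [Pi.single_apply, hb.symm]
      · intro h; exact absurd hk h
    · rw [hc k hk]
      refine (Finset.sum_eq_zero ?_).symm
      intro b hb
      have : k ≠ b := by rintro rfl; exact hk hb
      simp [Pi.single_apply, this]
  rw [hrepr]
  exact Submodule.sum_mem _ fun j hj => Submodule.smul_mem _ _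
    (Submodule.subset_span ⟨j, hj, rfl⟩)

variable {B : Matrix (Fin n) (Fin n) ℝ} (hB : B.IsHermitian)

/-- The orthogonal change of variables associated to a Hermitian matrix. -/
def P : Matrix (Fin n) (Fin n) ℝ := (hB.eigenvectorUnitary : Matrix (Fin n) (Fin n) ℝ)

lemma P_mul_transpose : P hB * (P hB)ᵀ = 1 := by
  have := (Matrix.mem_unitaryGroup_iff).mp hB.eigenvectorUnitary.2
  simpa [P, Matrix.star_eq_conjTranspose] using this

lemma transpose_mul_P : (P hB)ᵀ * P hB = 1 := by
  have := (Matrix.mem_unitaryGroup_iff').mp hB.eigenvectorUnitary.2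
  simpa [P, Matrix.star_eq_conjTranspose] using this

lemma spectral : B = P hB * Matrix.diagonal hB.eigenvalues * (P hB)ᵀ := by
  have := hB.spectral_theorem
  rw [RCLike.ofReal_real_eq_id] at this
  simpa [P, Matrix.star_eq_conjTranspose, Function.comp_def] using this

/-- Quadratic form in diagonalizing coordinates. -/
lemma quad_eq (x : Fin n → ℝ) :
    dotProduct x (B *ᵥ x) = ∑ j, hB.eigenvalues j * ((P hB)ᵀ *ᵥ x) j ^ 2 := by
  set y := (P hB)ᵀ *ᵥ x with hy
  calc dotProduct x (B *ᵥ x)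
      = dotProduct x ((P hB * Matrix.diagonal hB.eigenvalues * (P hB)ᵀ) *ᵥ x) := by
        rw [← spectral hB]
    _ = dotProduct y (Matrix.diagonal hB.eigenvalues *ᵥ y) := by
        rw [← Matrix.mulVec_mulVec, ← Matrix.mulVec_mulVec, Matrix.dotProduct_mulVec x,
          ← Matrix.mulVec_transpose]
    _ = ∑ j, hB.eigenvalues j * y j ^ 2 := by
        simp [dotProduct, Matrix.mulVec_diagonal]
        refine Finset.sum_congr rfl fun j _ => by ring

lemma norm_eq (x : Fin n → ℝ) :
    dotProduct x x = ∑ j, ((P hB)ᵀ *ᵥ x) j ^ 2 := by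
  set y := (P hB)ᵀ *ᵥ x with hy
  have : dotProduct y y = dotProduct x x := by
    rw [hy, Matrix.dotProduct_mulVec, Matrix.vecMul_transpose,
      Matrix.mulVec_mulVec, P_mul_transpose hB, Matrix.one_mulVec]
  rw [← this]
  simp [dotProduct, pow_two]

end Aux
namespace Aux
variable {n : ℕ} {B : Matrix (Fin n) (Fin n) ℝ} (hB : B.IsHermitian)

/-- linear equivalence given by the orthogonal matrix `P hB` -/
def Pequiv : (Fin n → ℝ) ≃ₗ[ℝ] (Fin n → ℝ) :=
  LinearEquiv.ofLinear (Matrix.mulVecLin (P hB)) (Matrix.mulVecLin (P hB)ᵀ)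
    (by rw [← Matrix.mulVecLin_mul, P_mul_transpose hB, Matrix.mulVecLin_one])
    (by rw [← Matrix.mulVecLin_mul, transpose_mul_P hB, Matrix.mulVecLin_one])

/-- span of selected eigenvectors -/
def eigSpan (S : Finset (Fin n)) : Submodule ℝ (Fin n → ℝ) :=
  Submodule.map ((Pequiv hB : (Fin n → ℝ) ≃ₗ[ℝ] (Fin n → ℝ)) :
    (Fin n → ℝ) →ₗ[ℝ] (Fin n → ℝ)) (coordSpan S)

lemma finrank_eigSpan (S : Finset (Fin n)) :
    Module.finrank ℝ (eigSpan hB S) = S.card := by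
  rw [eigSpan, LinearEquiv.finrank_map_eq, finrank_coordSpan]

lemma eigSpan_support {S : Finset (Fin n)} {x : Fin n → ℝ} (hx : x ∈ eigSpan hB S) :
    ∀ j ∉ S, ((P hB)ᵀ *ᵥ x) j = 0 := by
  rcases hx with ⟨c, hc, rfl⟩
  have h : (P hB)ᵀ *ᵥ (((Pequiv hB) : (Fin n → ℝ) →ₗ[ℝ] (Fin n → ℝ)) c) = c := by
    show (P hB)ᵀ *ᵥ ((P hB) *ᵥ c) = c
    rw [Matrix.mulVec_mulVec, transpose_mul_P hB, Matrix.one_mulVec]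
  rw [h]
  exact mem_coordSpan_support hc

lemma quad_le_of_mem {S : Finset (Fin n)} {x : Fin n → ℝ} (hx : x ∈ eigSpan hB S) {c : ℝ}
    (hle : ∀ j ∈ S, hB.eigenvalues j ≤ c) :
    dotProduct x (B *ᵥ x) ≤ c * dotProduct x x := by
  rw [quad_eq hB, norm_eq hB, Finset.mul_sum]
  refine Finset.sum_le_sum fun j _ => ?_
  by_cases hj : j ∈ S
  · exact mul_le_mul_of_nonneg_right (hle j hj) (sq_nonneg _)
  · rw [eigSpan_support hB hx j hj]; simp

lemma quad_ge_of_mem {S : Finset (Fin n)} {x : Fin n → ℝ} (hx : x ∈ eigSpan hB S) {c : ℝ}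
    (hge : ∀ j ∈ S, c ≤ hB.eigenvalues j) :
    c * dotProduct x x ≤ dotProduct x (B *ᵥ x) := by
  rw [quad_eq hB, norm_eq hB, Finset.mul_sum]
  refine Finset.sum_le_sum fun j _ => ?_
  by_cases hj : j ∈ S
  · exact mul_le_mul_of_nonneg_right (hge j hj) (sq_nonneg _)
  · rw [eigSpan_support hB hx j hj]; simp

end Aux

/-- **Weyl monotonicity**: eigenvalues are monotone under psd perturbation. -/
theorem sortedEig_mono {n : ℕ} {A B : Matrix (Fin n) (Fin n) ℝ}
    (hA : A.IsHermitian) (hB : B.IsHermitian) (hd : (B - A).PosSemidef) (i : Fin n) :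
    sortedEig A hA i ≤ sortedEig B hB i := by
  classical
  set σB := Tuple.sort hB.eigenvalues
  set σA := Tuple.sort hA.eigenvalues
  set SB : Finset (Fin n) := Finset.image σB (Finset.Iic i)
  set SA : Finset (Fin n) := Finset.image σA (Finset.Ici i)
  have hcardB : SB.card = (i : ℕ) + 1 := by
    rw [Finset.card_image_of_injective _ σB.injective, Fin.card_Iic]
  have hcardA : SA.card = n - (i : ℕ) := by
    rw [Finset.card_image_of_injective _ σA.injective, Fin.card_Ici]
  set V := Aux.eigSpan hB SB
  set W := Aux.eigSpan hA SA
  have hV : Module.finrank ℝ V = (i : ℕ) + 1 := by rw [Aux.finrank_eigSpan, hcardB]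
  have hW : Module.finrank ℝ W = n - (i : ℕ) := by rw [Aux.finrank_eigSpan, hcardA]
  have hne : V ⊓ W ≠ ⊥ := by
    intro hbot
    have h1 := Submodule.finrank_sup_add_finrank_inf_eq V W
    rw [hbot] at h1
    have h2 : Module.finrank ℝ ↥(V ⊔ W) ≤ n := by
      have := Submodule.finrank_le (V ⊔ W)
      rwa [Module.finrank_pi, Fintype.card_fin] at this
    rw [hV, hW] at h1
    simp [finrank_bot] at h1
    omega
  obtain ⟨x, hxVW, hx0⟩ := Submodule.exists_mem_ne_zero_of_ne_bot hne
  have hxV : x ∈ V := hxVW.1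
  have hxW : x ∈ W := hxVW.2
  have hdot : 0 < dotProduct x x := by
    obtain ⟨j, hj⟩ := Function.ne_iff.mp hx0
    refine Finset.sum_pos' (fun k _ => mul_self_nonneg _) ⟨j, Finset.mem_univ j, ?_⟩
    exact mul_self_pos.mpr (by simpa using hj)
  have hBbound : ∀ j ∈ SB, hB.eigenvalues j ≤ sortedEig B hB i := by
    intro j hj
    obtain ⟨k, hk, rfl⟩ := Finset.mem_image.mp hj
    exact Tuple.monotone_sort hB.eigenvalues (Finset.mem_Iic.mp hk)
  have hAbound : ∀ j ∈ SA, sortedEig A hA i ≤ hA.eigenvalues j := by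
    intro j hj
    obtain ⟨k, hk, rfl⟩ := Finset.mem_image.mp hj
    exact Tuple.monotone_sort hA.eigenvalues (Finset.mem_Ici.mp hk)
  have h1 : sortedEig A hA i * dotProduct x x ≤ dotProduct x (A *ᵥ x) :=
    Aux.quad_ge_of_mem hA hxW hAbound
  have h2 : dotProduct x (A *ᵥ x) ≤ dotProduct x (B *ᵥ x) := by
    have := hd.dotProduct_mulVec_nonneg x
    rw [Matrix.sub_mulVec] at this
    have hstar : (star x : Fin n → ℝ) = x := by
      funext k; simp
    rw [hstar, dotProduct_sub] at this
    linarith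
  have h3 : dotProduct x (B *ᵥ x) ≤ sortedEig B hB i * dotProduct x x :=
    Aux.quad_le_of_mem hB hxV hBbound
  have := le_of_mul_le_mul_right (by linarith : sortedEig A hA i * dotProduct x x ≤ sortedEig B hB i * dotProduct x x) hdot
  -- careful: mul on the right
  exact le_of_mul_le_mul_right (by linarith) hdot

theorem Gp_mono {n p : ℕ} (hpn : p ≤ n) {A B : Matrix (Fin n) (Fin n) ℝ}
    (hA : A.IsHermitian) (hB : B.IsHermitian) (hd : (B - A).PosSemidef) :
    Gp p A ≤ Gp p B := by
  rw [Gp, Gp, dif_pos hA, dif_pos hB]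
  refine Finset.sum_le_sum fun i _ => ?_
  have hc : (0:ℝ) ≤ if (i : ℕ) < p then ((n : ℝ) - p) else (p : ℝ) := by
    split
    · have : (p:ℝ) ≤ (n:ℝ) := by exact_mod_cast hpn
      linarith
    · positivity
  exact mul_le_mul_of_nonneg_left (sortedEig_mono hA hB hd i) hc


/-- 1D second derivative test at a local max. -/
lemma second_deriv_nonpos_of_isLocalMax {g G : ℝ → ℝ} {c : ℝ}
    (hg : ∀ᶠ t in nhds (0:ℝ), HasDerivAt g (G t) t)
    (hG : HasDerivAt G c 0) (hG0 : G 0 = 0) (hmax : IsLocalMax g 0) : c ≤ 0 := by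
  by_contra hc
  push_neg at hc
  -- slope of G tends to c > 0
  have hslope : Filter.Tendsto (slope G 0) (nhdsWithin 0 {(0:ℝ)}ᶜ) (nhds c) :=
    hasDerivAt_iff_tendsto_slope.mp hG
  have hpos : ∀ᶠ t in nhdsWithin (0:ℝ) (Set.Ioi 0), 0 < G t := by
    have h1 : ∀ᶠ t in nhdsWithin (0:ℝ) {(0:ℝ)}ᶜ, 0 < slope G 0 t :=
      hslope.eventually (eventually_gt_nhds hc)
    have h2 : ∀ᶠ t in nhdsWithin (0:ℝ) (Set.Ioi 0), 0 < slope G 0 t :=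
      nhdsWithin_mono (0:ℝ) (fun t (ht : t ∈ Set.Ioi 0) => (ne_of_gt ht : t ≠ 0)) h1
    have h3 : ∀ᶠ t in nhdsWithin (0:ℝ) (Set.Ioi 0), t ∈ Set.Ioi (0:ℝ) :=
      eventually_mem_nhdsWithin
    filter_upwards [h2, h3] with t h2t h3t
    have hslope_eq : slope G 0 t = G t / t := by
      simp [slope_def_field, hG0]
    rw [hslope_eq] at h2t
    rcases div_pos_iff.mp h2t with ⟨h, _⟩ | ⟨_, h⟩
    · exact h
    · exact absurd h3t (not_lt.mpr h.le)
  -- extract radii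
  obtain ⟨ε1, hε1, hg'⟩ := Metric.eventually_nhds_iff.mp hg
  obtain ⟨ε2, hε2, hmx⟩ := Metric.eventually_nhds_iff.mp hmax
  obtain ⟨ε3, hε3, hGp'⟩ := Metric.mem_nhdsWithin_iff.mp hpos
  have hGp : ∀ t : ℝ, dist t 0 < ε3 → 0 < t → 0 < G t := fun t h1 h2 =>
    hGp' ⟨Metric.mem_ball.mpr h1, h2⟩
  set δ := min (min ε1 ε2) ε3 / 2 with hδ
  have hδpos : 0 < δ := by positivity
  have hδ1 : δ < ε1 := by
    have : δ ≤ min (min ε1 ε2) ε3 / 2 := le_rfl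
    have h := min_le_left (min ε1 ε2) ε3
    have h' := min_le_left ε1 ε2
    simp only [hδ]; nlinarith [lt_min (lt_min hε1 hε2) hε3]
  have hδ2 : δ < ε2 := by
    have h := min_le_left (min ε1 ε2) ε3
    have h' := min_le_right ε1 ε2
    simp only [hδ]; nlinarith [lt_min (lt_min hε1 hε2) hε3]
  have hδ3 : δ < ε3 := by
    have h := min_le_right (min ε1 ε2) ε3
    simp only [hδ]; nlinarith [lt_min (lt_min hε1 hε2) hε3]
  -- g is strictly monotone on [0, δ]
  have hmono : StrictMonoOn g (Set.Icc 0 δ) := by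
    refine strictMonoOn_of_deriv_pos (convex_Icc 0 δ) ?_ ?_
    · intro t ht
      have habs : |t| < ε1 := by
        rw [abs_lt]; constructor <;> [linarith [ht.1]; linarith [ht.2]]
      have := hg' (show dist t 0 < ε1 by simpa [Real.dist_eq] using habs)
      exact this.continuousAt.continuousWithinAt
    · intro t ht
      rw [interior_Icc] at ht
      have habs : |t| < ε1 := by
        rw [abs_lt]; constructor <;> [linarith [ht.1]; linarith [ht.2]]
      have hd := hg' (show dist t 0 < ε1 by simpa [Real.dist_eq] using habs)
      rw [hd.deriv]
      refine hGp t ?_ ht.1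
      show dist t 0 < ε3
      rw [Real.dist_eq, sub_zero, abs_of_pos ht.1]; linarith [ht.2]
  have hlt : g 0 < g δ := hmono (Set.left_mem_Icc.mpr hδpos.le)
    (Set.right_mem_Icc.mpr hδpos.le) hδpos
  have hle : g δ ≤ g 0 := hmx (show dist δ 0 < ε2 by rw [Real.dist_eq, sub_zero, abs_of_pos hδpos]; exact hδ2)
  linarith


variable {n : ℕ}

local notation "E" => EuclideanSpace ℝ (Fin n)

/-- At an interior local max of a C² function, the gradient vanishes and the second
derivative is negative semidefinite. -/
lemma interior_max_second_deriv {Ω : Set (EuclideanSpace ℝ (Fin n))} (hΩo : IsOpen Ω)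
    {φ : EuclideanSpace ℝ (Fin n) → ℝ} {x₀ : EuclideanSpace ℝ (Fin n)} (hx₀ : x₀ ∈ Ω)
    (hφ : ContDiffOn ℝ 2 φ Ω) (hmax : IsLocalMax φ x₀) :
    fderiv ℝ φ x₀ = 0 ∧ ∀ y : EuclideanSpace ℝ (Fin n),
      (fderiv ℝ (fderiv ℝ φ) x₀ y) y ≤ 0 := by
  have hmem : Ω ∈ nhds x₀ := hΩo.mem_nhds hx₀
  have hφx : ContDiffAt ℝ 2 φ x₀ := hφ.contDiffAt hmem
  have hdiff : ∀ z ∈ Ω, DifferentiableAt ℝ φ z := fun z hz =>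
    (hφ.contDiffAt (hΩo.mem_nhds hz)).differentiableAt (by norm_num)
  have hf'0 : fderiv ℝ φ x₀ = 0 := hmax.fderiv_eq_zero
  refine ⟨hf'0, fun y => ?_⟩
  have hf'diff : DifferentiableAt ℝ (fderiv ℝ φ) x₀ := by
    have h1 : ContDiffAt ℝ 1 (fderiv ℝ φ) x₀ := hφx.fderiv_right (m := 1) (by norm_num)
    exact h1.differentiableAt one_ne_zero
  set γ : ℝ → EuclideanSpace ℝ (Fin n) := fun t => x₀ + t • y with hγ
  have hγ0 : γ 0 = x₀ := by simp [hγ]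
  have hγcont : Continuous γ := continuous_const.add (continuous_id.smul continuous_const)
  have hγt : ∀ t : ℝ, HasDerivAt γ y t := by
    intro t
    have h := ((hasDerivAt_id t).smul_const y).const_add x₀
    simpa [hγ] using h
  set g : ℝ → ℝ := fun t => φ (γ t) with hgdef
  set G : ℝ → ℝ := fun t => fderiv ℝ φ (γ t) y with hGdef
  have hγΩ : ∀ᶠ t in nhds (0:ℝ), γ t ∈ Ω := by
    have : Filter.Tendsto γ (nhds 0) (nhds x₀) := by
      rw [← hγ0]; exact hγcont.tendsto 0
    exact this.eventually_mem hmem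
  have hg : ∀ᶠ t in nhds (0:ℝ), HasDerivAt g (G t) t := by
    filter_upwards [hγΩ] with t ht
    exact ((hdiff _ ht).hasFDerivAt).comp_hasDerivAt t (hγt t)
  have hG : HasDerivAt G ((fderiv ℝ (fderiv ℝ φ) x₀ y) y) 0 := by
    have h1 : HasDerivAt (fun t => fderiv ℝ φ (γ t)) (fderiv ℝ (fderiv ℝ φ) x₀ y) 0 := by
      have hfd : HasFDerivAt (fderiv ℝ φ) (fderiv ℝ (fderiv ℝ φ) x₀) (γ 0) := by
        rw [hγ0]; exact hf'diff.hasFDerivAt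
      exact hfd.comp_hasDerivAt 0 (hγt 0)
    have h2 := (ContinuousLinearMap.apply ℝ ℝ y).hasFDerivAt.comp_hasDerivAt 0 h1
    exact h2
  have hG0 : G 0 = 0 := by simp [hGdef, hγ0, hf'0]
  have hgmax : IsLocalMax g 0 := by
    have ht : Filter.Tendsto γ (nhds 0) (nhds x₀) := by
      rw [← hγ0]; exact hγcont.tendsto 0
    have hmax' : IsMaxFilter φ (nhds x₀) (γ 0) := by rw [hγ0]; exact hmax
    exact hmax'.comp_tendsto ht
  exact second_deriv_nonpos_of_isLocalMax hg hG hG0 hgmax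

variable {n : ℕ}

lemma hessian_apply_eq {φ : EuclideanSpace ℝ (Fin n) → ℝ} {x₀ : EuclideanSpace ℝ (Fin n)}
    (hf'diff : DifferentiableAt ℝ (fderiv ℝ φ) x₀) (i j : Fin n) :
    hessian φ x₀ i j
      = (fderiv ℝ (fderiv ℝ φ) x₀ (EuclideanSpace.single i 1)) (EuclideanSpace.single j 1) := by
  set L := ContinuousLinearMap.apply ℝ ℝ (EuclideanSpace.single j (1:ℝ)) with hL
  have hfun : (fun z => pd φ z j) = L ∘ (fderiv ℝ φ) := rfl
  show pd (fun z => pd φ z j) x₀ i = _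
  rw [pd, hfun, fderiv_comp x₀ L.differentiableAt hf'diff, L.fderiv]
  rfl

lemma quad_hessian_eq {φ : EuclideanSpace ℝ (Fin n) → ℝ} {x₀ : EuclideanSpace ℝ (Fin n)}
    (hf'diff : DifferentiableAt ℝ (fderiv ℝ φ) x₀) (y : EuclideanSpace ℝ (Fin n)) :
    dotProduct (y : Fin n → ℝ) (hessian φ x₀ *ᵥ (y : Fin n → ℝ))
      = (fderiv ℝ (fderiv ℝ φ) x₀ y) y := by
  classical
  set f'' := fderiv ℝ (fderiv ℝ φ) x₀ with hf''
  have hy : y = ∑ i, (y i : ℝ) • (EuclideanSpace.single i (1:ℝ)) := by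
    have h1 := (EuclideanSpace.basisFun (Fin n) ℝ).sum_repr y
    simp only [EuclideanSpace.basisFun_repr, EuclideanSpace.basisFun_apply] at h1
    exact h1.symm
  have expand : (f'' y) y = ∑ i, ∑ j, y i * y j *
      ((f'' (EuclideanSpace.single i 1)) (EuclideanSpace.single j 1)) := by
    conv_lhs => rw [hy]
    simp only [map_sum, ContinuousLinearMap.sum_apply, Finset.mul_sum, Finset.sum_mul]
    rw [Finset.sum_comm]
    refine Finset.sum_congr rfl fun i _ => Finset.sum_congr rfl fun j _ => ?_
    rw [_root_.map_smul f'' (y i), ContinuousLinearMap.smul_apply,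
      _root_.map_smul (f'' (EuclideanSpace.single i 1)) (y j)]
    simp only [smul_eq_mul]; ring
  rw [expand]
  rw [dotProduct]
  refine Finset.sum_congr rfl fun i _ => ?_
  show (y i : ℝ) * ∑ j, hessian φ x₀ i j * y j = _
  rw [Finset.mul_sum]
  refine Finset.sum_congr rfl fun j _ => ?_
  rw [hessian_apply_eq hf'diff i j]
  ring



/-- One-sided comparison principle. -/
lemma dirichlet_comparison (n p : ℕ) (hn : 3 ≤ n) (hp2 : p ≤ n - 1)
    (Ω : Set (EuclideanSpace ℝ (Fin n))) (hΩo : IsOpen Ω)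
    (hΩb : Bornology.IsBounded Ω) (hΩc : IsConnected Ω)
    (w v : EuclideanSpace ℝ (Fin n) → ℝ)
    (hw2 : ContDiffOn ℝ 2 w Ω) (hv2 : ContDiffOn ℝ 2 v Ω)
    (hwc : ContinuousOn w (closure Ω)) (hvc : ContinuousOn v (closure Ω))
    (hew : ∀ x ∈ Ω, Gp p (schouten w x) = -Real.exp (-2 * w x))
    (hev : ∀ x ∈ Ω, Gp p (schouten v x) = -Real.exp (-2 * v x))
    (hbd : ∀ x ∈ frontier Ω, w x = v x) :
    ∀ x ∈ Ω, w x ≤ v x := by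
  have hpn : p ≤ n := by omega
  set u : EuclideanSpace ℝ (Fin n) → ℝ := fun x => w x - v x with hu
  have hu2 : ContDiffOn ℝ 2 u Ω := hw2.sub hv2
  have hucont : ContinuousOn u (closure Ω) := hwc.sub hvc
  have hcpt : IsCompact (closure Ω) := hΩb.isCompact_closure
  have hnecl : (closure Ω).Nonempty := hΩc.nonempty.closure
  obtain ⟨x₀, hx₀c, hmax⟩ := hcpt.exists_isMaxOn hnecl hucont
  rcases le_or_gt (u x₀) 0 with h0 | h0
  · intro x hx
    have h1 : u x ≤ u x₀ := hmax (subset_closure hx)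
    have : u x ≤ 0 := le_trans h1 h0
    simpa [hu] using this
  · exfalso
    have hx₀Ω : x₀ ∈ Ω := by
      by_contra hxo
      have hfr : x₀ ∈ frontier Ω := by
        rw [hΩo.frontier_eq]; exact ⟨hx₀c, hxo⟩
      have := hbd x₀ hfr
      have : u x₀ = 0 := by simp [hu, this]
      linarith
    have hmem : Ω ∈ nhds x₀ := hΩo.mem_nhds hx₀Ω
    have hlm : IsLocalMax u x₀ := by
      filter_upwards [hmem] with y hy
      exact hmax (subset_closure hy)
    obtain ⟨hgrad, hquad⟩ := interior_max_second_deriv hΩo hx₀Ω hu2 hlm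
    have hwd : DifferentiableAt ℝ w x₀ := (hw2.contDiffAt hmem).differentiableAt (by norm_num)
    have hvd : DifferentiableAt ℝ v x₀ := (hv2.contDiffAt hmem).differentiableAt (by norm_num)
    have hw'd : DifferentiableAt ℝ (fderiv ℝ w) x₀ :=
      ((hw2.contDiffAt hmem).fderiv_right (m := 1) (by norm_num)).differentiableAt one_ne_zero
    have hv'd : DifferentiableAt ℝ (fderiv ℝ v) x₀ :=
      ((hv2.contDiffAt hmem).fderiv_right (m := 1) (by norm_num)).differentiableAt one_ne_zero
    -- gradients agree at the interior max
    have hfd : fderiv ℝ w x₀ = fderiv ℝ v x₀ := by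
      have h := fderiv_sub hwd hvd
      have h2 : fderiv ℝ u x₀ = fderiv ℝ w x₀ - fderiv ℝ v x₀ := h
      rw [hgrad] at h2
      exact (sub_eq_zero.mp h2.symm)
    have hpd : ∀ i, pd w x₀ i = pd v x₀ i := fun i => by rw [pd, pd, hfd]
    -- second derivatives subtract
    have hsubev : (fun z => fderiv ℝ u z) =ᶠ[nhds x₀]
        (fun z => fderiv ℝ w z - fderiv ℝ v z) := by
      filter_upwards [hmem] with z hz
      exact fderiv_sub ((hw2.contDiffAt (hΩo.mem_nhds hz)).differentiableAt (by norm_num))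
        ((hv2.contDiffAt (hΩo.mem_nhds hz)).differentiableAt (by norm_num))
    have hf''u : fderiv ℝ (fderiv ℝ u) x₀
        = fderiv ℝ (fderiv ℝ w) x₀ - fderiv ℝ (fderiv ℝ v) x₀ := by
      rw [hsubev.fderiv_eq]
      exact fderiv_sub hw'd hv'd
    -- the Schouten matrices are Hermitian (else the equation is absurd)
    have hAH : (schouten w x₀).IsHermitian := by
      by_contra hA
      have h := hew x₀ hx₀Ω
      rw [Gp, dif_neg hA] at h
      nlinarith [Real.exp_pos (-2 * w x₀)]
    have hBH : (schouten v x₀).IsHermitian := by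
      by_contra hA
      have h := hev x₀ hx₀Ω
      rw [Gp, dif_neg hA] at h
      nlinarith [Real.exp_pos (-2 * v x₀)]
    -- difference of Schouten matrices is psd at the max point
    have hsch : schouten v x₀ - schouten w x₀ = hessian v x₀ - hessian w x₀ := by
      rw [schouten, schouten]
      have hM : Matrix.of (fun i j => pd v x₀ i * pd v x₀ j)
          = Matrix.of (fun i j => pd w x₀ i * pd w x₀ j) := by
        ext i j
        simp only [Matrix.of_apply]
        rw [hpd i, hpd j]
      have hsum : (∑ i, (pd v x₀ i) ^ 2) = ∑ i, (pd w x₀ i) ^ 2 := by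
        refine Finset.sum_congr rfl fun i _ => by rw [hpd i]
      rw [hM, hsum]
      abel
    have hN : (schouten v x₀ - schouten w x₀).PosSemidef := by
      refine Matrix.PosSemidef.of_dotProduct_mulVec_nonneg (hBH.sub hAH) fun x => ?_
      have hstar : (star x : Fin n → ℝ) = x := funext fun k => by simp
      rw [hstar, hsch, Matrix.sub_mulVec, dotProduct_sub]
      set ye : EuclideanSpace ℝ (Fin n) := (WithLp.equiv 2 (Fin n → ℝ)).symm x with hye
      have hv'' := quad_hessian_eq hv'd ye
      have hw'' := quad_hessian_eq hw'd ye
      have hq : dotProduct x (hessian v x₀ *ᵥ x) - dotProduct x (hessian w x₀ *ᵥ x)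
          = (fderiv ℝ (fderiv ℝ v) x₀ ye) ye - (fderiv ℝ (fderiv ℝ w) x₀ ye) ye := by
        rw [← hv'', ← hw'']
        rfl
      rw [hq]
      have hle := hquad ye
      rw [hf''u] at hle
      simp only [ContinuousLinearMap.sub_apply, ContinuousLinearMap.coe_sub', Pi.sub_apply] at hle
      linarith
    -- monotonicity of Gp gives the comparison of the right-hand sides
    have hmono := Gp_mono hpn hAH hBH hN
    rw [hew x₀ hx₀Ω, hev x₀ hx₀Ω] at hmono
    have hexp : Real.exp (-2 * v x₀) ≤ Real.exp (-2 * w x₀) := by linarith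
    have hwv : w x₀ ≤ v x₀ := by
      have := Real.exp_le_exp.mp hexp
      linarith
    have : u x₀ ≤ 0 := by simp [hu]; linarith
    linarith


/-- **Uniqueness for the Dirichlet problem with curvature `−1`**: two solutions of
`G_p(A^u) = −e^{-2u}` on a bounded domain `Ω`, continuous up to the boundary and agreeing on
`∂Ω`, coincide on `Ω` (by the maximum principle). -/
theorem dirichlet_uniqueness_negative (n p : ℕ) (hn : 3 ≤ n) (hp1 : 1 ≤ p) (hp2 : p ≤ n - 1)
    (Ω : Set (EuclideanSpace ℝ (Fin n))) (hΩo : IsOpen Ω)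
    (hΩb : Bornology.IsBounded Ω) (hΩc : IsConnected Ω)
    (w v : EuclideanSpace ℝ (Fin n) → ℝ)
    (hw2 : ContDiffOn ℝ 2 w Ω) (hv2 : ContDiffOn ℝ 2 v Ω)
    (hwc : ContinuousOn w (closure Ω)) (hvc : ContinuousOn v (closure Ω))
    (hew : ∀ x ∈ Ω, Gp p (schouten w x) = -Real.exp (-2 * w x))
    (hev : ∀ x ∈ Ω, Gp p (schouten v x) = -Real.exp (-2 * v x))
    (hbd : ∀ x ∈ frontier Ω, w x = v x) :
    ∀ x ∈ Ω, w x = v x := by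
  intro x hx
  have h1 := dirichlet_comparison n p hn hp2 Ω hΩo hΩb hΩc w v hw2 hv2 hwc hvc hew hev hbd x hx
  have h2 := dirichlet_comparison n p hn hp2 Ω hΩo hΩb hΩc v w hv2 hw2 hvc hwc hev hew
    (fun y hy => (hbd y hy).symm) x hx
  linarith

end
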